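/- The six elements x_1, x_2, x_3, z_1², z_2², z_3² of R are algebraically independent over K, and R^H is a free module of rank two over the subalgebra P := K[x_1, x_2, x_3, z_1², z_2², z_3²] with basis {1, z_1z_2z_3}; that is, R^H = P ⊕ P·z_1z_2z_3. -/

import Mathlib

noncomputable section

open MvPolynomial

/-- The set of two-element subsets of `{1,2,3,4}` (modelled as non-diagonal unordered
pairs of elements of `Fin 4`), indexing the variables of the polynomial ring `R`. -/
abbrev PairIdx : Type := {p : Sym2 (Fin 4) // ¬ p.IsDiag}

/-- The two-element subset `{i, j}`. -/
def pr (i j : Fin 4) (h : i ≠ j) : PairIdx := ⟨s(i, j), by simp [Sym2.mk_isDiag_iff, h]⟩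

/-- The permutation of two-element subsets induced by a permutation `σ` of `{1,2,3,4}`. -/
def pairPerm (σ : Equiv.Perm (Fin 4)) : Equiv.Perm PairIdx :=
  Equiv.subtypeEquiv
    { toFun := Sym2.map σ
      invFun := Sym2.map σ.symm
      left_inv := fun p => by
        rw [show Sym2.map σ.symm (Sym2.map σ p) = Sym2.map (σ.symm ∘ σ) p by
          rw [Sym2.map_comp]; rfl]
        simp
      right_inv := fun p => by
        rw [show Sym2.map σ (Sym2.map σ.symm p) = Sym2.map (σ ∘ σ.symm) p by
          rw [Sym2.map_comp]; rfl]
        simp }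
    (fun p => not_congr (Sym2.isDiag_map σ.injective).symm)

variable (K : Type*) [Field K]

/-- `R := K[x_{{i,j}}]`, the six-variable polynomial ring on the variables indexed by
the two-element subsets of `{1,2,3,4}`. -/
abbrev R4 : Type _ := MvPolynomial PairIdx K

/-- The action of `σ ∈ S₄` on `R`, `σ · x_{{i,j}} = x_{{σ(i),σ(j)}}`, as a `K`-algebra
homomorphism. -/
def actS4 (σ : Equiv.Perm (Fin 4)) : R4 K →ₐ[K] R4 K := rename (pairPerm σ)

/-- The invariant subalgebra `R^{S₄}`. -/
def S4Inv : Subalgebra K (R4 K) :=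
  ⨅ σ : Equiv.Perm (Fin 4), AlgHom.equalizer (actS4 K σ) (AlgHom.id K (R4 K))

/-- `x₁ = x_{{1,2}} + x_{{3,4}}`, `x₂ = x_{{1,3}} + x_{{2,4}}`, `x₃ = x_{{1,4}} + x_{{2,3}}`
(vertices renamed `1,2,3,4 → 0,1,2,3`). -/
def xg : Fin 3 → R4 K :=
  ![X (pr 0 1 (by decide)) + X (pr 2 3 (by decide)),
    X (pr 0 2 (by decide)) + X (pr 1 3 (by decide)),
    X (pr 0 3 (by decide)) + X (pr 1 2 (by decide))]

/-- `z₁ = x_{{1,2}} − x_{{3,4}}`, `z₂ = x_{{1,3}} − x_{{2,4}}`, `z₃ = x_{{1,4}} − x_{{2,3}}`. -/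
def zg : Fin 3 → R4 K :=
  ![X (pr 0 1 (by decide)) - X (pr 2 3 (by decide)),
    X (pr 0 2 (by decide)) - X (pr 1 3 (by decide)),
    X (pr 0 3 (by decide)) - X (pr 1 2 (by decide))]

/-- `[x^a z^{2b}] := Σ_{i=1}^{3} x_i^a z_i^{2b}`. -/
def pSum (a b : ℕ) : R4 K := ∑ i : Fin 3, xg K i ^ a * zg K i ^ (2 * b)

/-- The Klein four subgroup `H = {id, (12)(34), (13)(24), (14)(23)}` of `S₄`
(vertices renamed `1,2,3,4 → 0,1,2,3`). -/
def klein : Set (Equiv.Perm (Fin 4)) :=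
  {1, Equiv.swap 0 1 * Equiv.swap 2 3, Equiv.swap 0 2 * Equiv.swap 1 3,
    Equiv.swap 0 3 * Equiv.swap 1 2}

/-- The subalgebra `R^H` of `H`-invariants. -/
def HInv : Subalgebra K (R4 K) :=
  ⨅ σ ∈ klein, AlgHom.equalizer (actS4 K σ) (AlgHom.id K (R4 K))

namespace StmtAux

open Sum

lemma pair_cases (p : PairIdx) :
    p = pr 0 1 (by decide) ∨ p = pr 0 2 (by decide) ∨ p = pr 0 3 (by decide) ∨
    p = pr 1 2 (by decide) ∨ p = pr 1 3 (by decide) ∨ p = pr 2 3 (by decide) := by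
  revert p; decide

variable (K : Type*) [Field K]

def Phi : MvPolynomial (Fin 3 ⊕ Fin 3) K →ₐ[K] R4 K := aeval (Sum.elim (xg K) (zg K))

@[simp] lemma Phi_Xl (j : Fin 3) : Phi K (X (inl j)) = xg K j := by simp [Phi]
@[simp] lemma Phi_Xr (j : Fin 3) : Phi K (X (inr j)) = zg K j := by simp [Phi]
@[simp] lemma Phi_C (c : K) : Phi K (C c) = C c := by simp [Phi, algebraMap_eq]

@[simp] lemma xg0 : xg K 0 = X (pr 0 1 (by decide)) + X (pr 2 3 (by decide)) := rfl
@[simp] lemma xg1 : xg K 1 = X (pr 0 2 (by decide)) + X (pr 1 3 (by decide)) := rfl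
@[simp] lemma xg2 : xg K 2 = X (pr 0 3 (by decide)) + X (pr 1 2 (by decide)) := rfl
@[simp] lemma zg0 : zg K 0 = X (pr 0 1 (by decide)) - X (pr 2 3 (by decide)) := rfl
@[simp] lemma zg1 : zg K 1 = X (pr 0 2 (by decide)) - X (pr 1 3 (by decide)) := rfl
@[simp] lemma zg2 : zg K 2 = X (pr 0 3 (by decide)) - X (pr 1 2 (by decide)) := rfl

def psf : PairIdx → MvPolynomial (Fin 3 ⊕ Fin 3) K := fun p =>
  if p.1 = s(0, 1) then C (2⁻¹:K) * (X (inl 0) + X (inr 0))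
  else if p.1 = s(2, 3) then C (2⁻¹:K) * (X (inl 0) - X (inr 0))
  else if p.1 = s(0, 2) then C (2⁻¹:K) * (X (inl 1) + X (inr 1))
  else if p.1 = s(1, 3) then C (2⁻¹:K) * (X (inl 1) - X (inr 1))
  else if p.1 = s(0, 3) then C (2⁻¹:K) * (X (inl 2) + X (inr 2))
  else C (2⁻¹:K) * (X (inl 2) - X (inr 2))

def Psi : R4 K →ₐ[K] MvPolynomial (Fin 3 ⊕ Fin 3) K := aeval (psf K)

@[simp] lemma psf_01 (h) : psf K (pr 0 1 h) = C (2⁻¹:K) * (X (inl 0) + X (inr 0)) := by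
  simp [psf, pr]
@[simp] lemma psf_23 (h) : psf K (pr 2 3 h) = C (2⁻¹:K) * (X (inl 0) - X (inr 0)) := by
  simp [psf, pr]
@[simp] lemma psf_02 (h) : psf K (pr 0 2 h) = C (2⁻¹:K) * (X (inl 1) + X (inr 1)) := by
  simp [psf, pr]
@[simp] lemma psf_13 (h) : psf K (pr 1 3 h) = C (2⁻¹:K) * (X (inl 1) - X (inr 1)) := by
  simp [psf, pr]
@[simp] lemma psf_03 (h) : psf K (pr 0 3 h) = C (2⁻¹:K) * (X (inl 2) + X (inr 2)) := by
  simp [psf, pr]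
@[simp] lemma psf_12 (h) : psf K (pr 1 2 h) = C (2⁻¹:K) * (X (inl 2) - X (inr 2)) := by
  simp [psf, pr]

variable {K}

set_option maxHeartbeats 1000000 in
lemma comp1 (h2 : (2:K) ≠ 0) : (Phi K).comp (Psi K) = AlgHom.id K (R4 K) := by
  have hC : (C (2⁻¹:K) : R4 K) * 2 = 1 := by
    rw [show (2 : R4 K) = C (2:K) from (map_ofNat (C : K →+* _) 2).symm, ← C_mul, inv_mul_cancel₀ h2, C_1]
  have e1 : ∀ u v : R4 K, C (2⁻¹:K) * (u + v + (u - v)) = u := fun u v => by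
    linear_combination u * hC
  have e2 : ∀ u v : R4 K, C (2⁻¹:K) * (u + v - (u - v)) = v := fun u v => by
    linear_combination v * hC
  apply MvPolynomial.algHom_ext
  intro p
  rcases pair_cases p with h | h | h | h | h | h <;> subst h <;>
    simp only [AlgHom.comp_apply, AlgHom.id_apply, Psi, aeval_X, psf_01, psf_02, psf_03,
      psf_12, psf_13, psf_23, map_mul, map_add, map_sub, Phi_Xl, Phi_Xr, Phi_C,
      xg0, xg1, xg2, zg0, zg1, zg2, Fin.zero_eta, Fin.mk_one, Fin.reduceFinMk] <;>
    first
      | rw [e1]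
      | rw [e2]

lemma comp2 (h2 : (2:K) ≠ 0) :
    (Psi K).comp (Phi K) = AlgHom.id K (MvPolynomial (Fin 3 ⊕ Fin 3) K) := by
  have hC : (C (2⁻¹:K) : MvPolynomial (Fin 3 ⊕ Fin 3) K) * 2 = 1 := by
    rw [show (2 : MvPolynomial (Fin 3 ⊕ Fin 3) K) = C (2:K) from
      (map_ofNat (C : K →+* _) 2).symm, ← C_mul, inv_mul_cancel₀ h2, C_1]
  have e1 : ∀ u v : MvPolynomial (Fin 3 ⊕ Fin 3) K,
      C (2⁻¹:K) * (u + v) + C (2⁻¹:K) * (u - v) = u := fun u v => by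
    linear_combination u * hC
  have e2 : ∀ u v : MvPolynomial (Fin 3 ⊕ Fin 3) K,
      C (2⁻¹:K) * (u + v) - C (2⁻¹:K) * (u - v) = v := fun u v => by
    linear_combination v * hC
  apply MvPolynomial.algHom_ext
  rintro (j | j) <;> fin_cases j <;>
    simp only [AlgHom.comp_apply, AlgHom.id_apply, Phi_Xl, Phi_Xr,
      xg0, xg1, xg2, zg0, zg1, zg2, map_add, map_sub, Psi, aeval_X,
      psf_01, psf_02, psf_03, psf_12, psf_13, psf_23, Fin.zero_eta, Fin.mk_one,
      Fin.reduceFinMk] <;>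
    first
      | exact e1 _ _
      | exact e2 _ _

lemma Phi_Psi (h2 : (2:K) ≠ 0) (f : R4 K) : Phi K (Psi K f) = f :=
  AlgHom.congr_fun (comp1 h2) f
lemma Psi_Phi (h2 : (2:K) ≠ 0) (g : MvPolynomial (Fin 3 ⊕ Fin 3) K) :
    Psi K (Phi K g) = g :=
  AlgHom.congr_fun (comp2 h2) g
lemma Phi_inj (h2 : (2:K) ≠ 0) : Function.Injective (Phi K) :=
  Function.LeftInverse.injective (Psi_Phi h2)

variable (K)

def kl : Fin 3 → Equiv.Perm (Fin 4) :=
  ![Equiv.swap 0 1 * Equiv.swap 2 3, Equiv.swap 0 2 * Equiv.swap 1 3,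
    Equiv.swap 0 3 * Equiv.swap 1 2]

def sg (k : Fin 3) : MvPolynomial (Fin 3 ⊕ Fin 3) K →ₐ[K] MvPolynomial (Fin 3 ⊕ Fin 3) K :=
  aeval (Sum.elim (fun j => X (inl j))
    (fun j => if j = k then X (inr j) else - X (inr j)))

@[simp] lemma sg_Xl (k j : Fin 3) : sg K k (X (inl j)) = X (inl j) := by simp [sg]
lemma sg_Xr (k j : Fin 3) :
    sg K k (X (inr j)) = if j = k then X (inr j) else - X (inr j) := by simp [sg]

def tbl (k : Fin 3) (p : PairIdx) : PairIdx :=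
  if k = 0 then
    (if p.1 = s(0,2) then pr 1 3 (by decide) else if p.1 = s(1,3) then pr 0 2 (by decide)
     else if p.1 = s(0,3) then pr 1 2 (by decide)
     else if p.1 = s(1,2) then pr 0 3 (by decide) else p)
  else if k = 1 then
    (if p.1 = s(0,1) then pr 2 3 (by decide) else if p.1 = s(2,3) then pr 0 1 (by decide)
     else if p.1 = s(0,3) then pr 1 2 (by decide)
     else if p.1 = s(1,2) then pr 0 3 (by decide) else p)
  else
    (if p.1 = s(0,1) then pr 2 3 (by decide) else if p.1 = s(2,3) then pr 0 1 (by decide)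
     else if p.1 = s(0,2) then pr 1 3 (by decide)
     else if p.1 = s(1,3) then pr 0 2 (by decide) else p)

lemma pairPerm_kl : ∀ (k : Fin 3) (p : PairIdx), pairPerm (kl k) p = tbl k p := by decide

variable {K}

lemma act_kl (k : Fin 3) :
    (actS4 K (kl k)).comp (Phi K) = (Phi K).comp (sg K k) := by
  apply MvPolynomial.algHom_ext
  rintro (j | j) <;> fin_cases k <;> fin_cases j <;>
    simp [actS4, sg_Xr, pairPerm_kl, tbl, pr, Fin.zero_eta, Fin.mk_one, Fin.reduceFinMk] <;>
    ring

lemma sg_invariant (h2 : (2:K) ≠ 0) {f : R4 K} (hf : f ∈ HInv K) (k : Fin 3) :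
    sg K k (Psi K f) = Psi K f := by
  have hmem : actS4 K (kl k) f = f := by
    have h1 := Algebra.mem_iInf.mp hf (kl k)
    have hk : kl k ∈ klein := by fin_cases k <;> simp [klein, kl]
    have h2' := Algebra.mem_iInf.mp h1 hk
    simpa using (AlgHom.mem_equalizer _ _ _).mp h2'
  apply Phi_inj h2
  calc Phi K (sg K k (Psi K f)) = actS4 K (kl k) (Phi K (Psi K f)) :=
        (AlgHom.congr_fun (act_kl k) _).symm
    _ = actS4 K (kl k) f := by rw [Phi_Psi h2]
    _ = f := hmem
    _ = Phi K (Psi K f) := (Phi_Psi h2 f).symm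

lemma monomial_eq_prod (d : (Fin 3 ⊕ Fin 3) →₀ ℕ) (c : K) :
    monomial d c = C c * ∏ i, (X i : MvPolynomial (Fin 3 ⊕ Fin 3) K) ^ d i := by
  rw [monomial_eq, Finsupp.prod_pow]

lemma diag_monomial (ε : (Fin 3 ⊕ Fin 3) → K) (d : (Fin 3 ⊕ Fin 3) →₀ ℕ) (c : K) :
    aeval (fun i => C (ε i) * X i) (monomial d c)
      = monomial d ((∏ i, ε i ^ d i) * c) := by
  rw [aeval_monomial, monomial_eq_prod, algebraMap_eq]
  have h1 : (d.prod fun i k => (C (ε i) * X i) ^ k)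
      = (d.prod fun i k => C (ε i ^ k)) * d.prod fun i k => X i ^ k := by
    rw [Finsupp.prod, Finsupp.prod, Finsupp.prod, ← Finset.prod_mul_distrib]
    exact Finset.prod_congr rfl fun i _ => by rw [mul_pow, C_pow]
  have h2 : (d.prod fun i k => (C (ε i ^ k) : MvPolynomial (Fin 3 ⊕ Fin 3) K))
      = C (∏ i, ε i ^ d i) := by
    rw [Finsupp.prod, ← map_prod]
    congr 1
    apply Finset.prod_subset (Finset.subset_univ _)
    intro i _ hi
    rw [Finsupp.notMem_support_iff.mp hi, pow_zero]
  rw [h1, h2, Finsupp.prod_pow, C_mul]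
  ring

lemma coeff_diag (ε : (Fin 3 ⊕ Fin 3) → K) (d : (Fin 3 ⊕ Fin 3) →₀ ℕ)
    (g : MvPolynomial (Fin 3 ⊕ Fin 3) K) :
    coeff d (aeval (fun i => C (ε i) * X i) g) = (∏ i, ε i ^ d i) * coeff d g := by
  induction g using MvPolynomial.induction_on' with
  | monomial u c =>
    rw [diag_monomial, coeff_monomial, coeff_monomial]
    split_ifs with h
    · subst h; rfl
    · rw [mul_zero]
  | add p q hp hq => simp only [map_add, coeff_add, hp, hq, mul_add]

lemma sg_eq (k : Fin 3) : sg K k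
    = aeval (fun i => C (Sum.elim (fun _ => (1:K)) (fun j => if j = k then 1 else -1) i)
        * X i) := by
  apply MvPolynomial.algHom_ext
  rintro (j | j)
  · simp [sg]
  · rw [aeval_X, sg_Xr]
    split_ifs with h <;> simp [h, map_neg, map_one]

lemma coeff_sg (k : Fin 3) (d : (Fin 3 ⊕ Fin 3) →₀ ℕ) (g : MvPolynomial (Fin 3 ⊕ Fin 3) K) :
    coeff d (sg K k g)
      = (∏ j : Fin 3, (if j = k then (1:K) else -1) ^ d (inr j)) * coeff d g := by
  rw [sg_eq k, coeff_diag]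
  congr 1
  rw [Fintype.prod_sum_type]
  simp

lemma coeff_even_or_odd (h2 : (2:K) ≠ 0) {g : MvPolynomial (Fin 3 ⊕ Fin 3) K}
    (hg : ∀ k, sg K k g = g) {d : (Fin 3 ⊕ Fin 3) →₀ ℕ} (hd : coeff d g ≠ 0) :
    (∀ j : Fin 3, Even (d (inr j))) ∨ (∀ j : Fin 3, Odd (d (inr j))) := by
  have step : ∀ k : Fin 3, ∀ j1 j2 : Fin 3,
      ((∏ j : Fin 3, (if j = k then (1:K) else -1) ^ d (inr j))
        = (-1:K) ^ (d (inr j1) + d (inr j2))) → Even (d (inr j1) + d (inr j2)) := by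
    intro k j1 j2 hprod
    by_contra hodd
    rw [Nat.not_even_iff_odd] at hodd
    have hc := coeff_sg k d g
    rw [hg k, hprod, Odd.neg_one_pow hodd] at hc
    have : (2:K) * coeff d g = 0 := by linear_combination hc
    exact hd ((mul_eq_zero.mp this).resolve_left h2)
  have e12 : Even (d (inr 1) + d (inr 2)) := by
    apply step 0 1 2
    rw [Fin.prod_univ_three, if_pos rfl, if_neg (by decide), if_neg (by decide), one_pow,
      one_mul, pow_add]
  have e02 : Even (d (inr 0) + d (inr 2)) := by
    apply step 1 0 2
    rw [Fin.prod_univ_three, if_neg (by decide), if_pos rfl, if_neg (by decide), one_pow,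
      pow_add]
    ring
  have e01 : Even (d (inr 0) + d (inr 1)) := by
    apply step 2 0 1
    rw [Fin.prod_univ_three, if_neg (by decide), if_neg (by decide), if_pos rfl, one_pow,
      pow_add]
    ring
  rcases Nat.even_or_odd (d (inr 0)) with h | h
  · left
    intro j
    fin_cases j
    · exact h
    · exact (Nat.even_add.mp e01).mp h
    · exact (Nat.even_add.mp e02).mp h
  · right
    intro j
    fin_cases j
    · exact h
    · show Odd (d (inr 1))
      rw [← Nat.not_even_iff_odd] at h ⊢
      exact fun he => h ((Nat.even_add.mp e01).mpr he)
    · show Odd (d (inr 2))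
      rw [← Nat.not_even_iff_odd] at h ⊢
      exact fun he => h ((Nat.even_add.mp e02).mpr he)

variable (K)

abbrev Sp : Set (MvPolynomial (Fin 3 ⊕ Fin 3) K) :=
  {X (inl 0), X (inl 1), X (inl 2), X (inr 0) ^ 2, X (inr 1) ^ 2, X (inr 2) ^ 2}

abbrev PP : Subalgebra K (MvPolynomial (Fin 3 ⊕ Fin 3) K) := Algebra.adjoin K (Sp K)

variable {K}

lemma genl (j : Fin 3) : (X (inl j) : MvPolynomial (Fin 3 ⊕ Fin 3) K) ∈ PP K := by
  apply Algebra.subset_adjoin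
  fin_cases j <;> simp [Sp]

lemma genr (j : Fin 3) : (X (inr j) : MvPolynomial (Fin 3 ⊕ Fin 3) K) ^ 2 ∈ PP K := by
  apply Algebra.subset_adjoin
  fin_cases j <;> simp [Sp]

lemma even_monomial_mem {d : (Fin 3 ⊕ Fin 3) →₀ ℕ} (hd : ∀ j, Even (d (inr j))) (c : K) :
    (monomial d c : MvPolynomial (Fin 3 ⊕ Fin 3) K) ∈ PP K := by
  rw [monomial_eq_prod, ← algebraMap_eq]
  apply mul_mem (Subalgebra.algebraMap_mem _ c)
  apply Subalgebra.prod_mem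
  rintro (j | j) _
  · exact pow_mem (genl j) _
  · obtain ⟨m, hm⟩ := hd j
    rw [hm, ← two_mul, pow_mul]
    exact pow_mem (genr j) m

lemma odd_monomial_eq {d : (Fin 3 ⊕ Fin 3) →₀ ℕ} (hd : ∀ j, Odd (d (inr j))) (c : K) :
    ∃ q ∈ PP K, (monomial d c : MvPolynomial (Fin 3 ⊕ Fin 3) K)
      = q * (X (inr 0) * X (inr 1) * X (inr 2)) := by
  obtain ⟨m0, h0⟩ := hd 0
  obtain ⟨m1, h1⟩ := hd 1
  obtain ⟨m2, h2⟩ := hd 2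
  refine ⟨C c * ((X (inl 0) ^ d (inl 0) * X (inl 1) ^ d (inl 1) * X (inl 2) ^ d (inl 2)) *
    ((X (inr 0) ^ 2) ^ m0 * (X (inr 1) ^ 2) ^ m1 * (X (inr 2) ^ 2) ^ m2)), ?_, ?_⟩
  · rw [← algebraMap_eq]
    exact mul_mem (Subalgebra.algebraMap_mem _ c)
      (mul_mem
        (mul_mem (mul_mem (pow_mem (genl 0) _) (pow_mem (genl 1) _)) (pow_mem (genl 2) _))
        (mul_mem (mul_mem (pow_mem (genr 0) _) (pow_mem (genr 1) _)) (pow_mem (genr 2) _)))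
  · rw [monomial_eq_prod, Fintype.prod_sum_type, Fin.prod_univ_three, Fin.prod_univ_three,
      h0, h1, h2]
    ring

lemma decomp (h2 : (2:K) ≠ 0) {g : MvPolynomial (Fin 3 ⊕ Fin 3) K}
    (hg : ∀ k, sg K k g = g) :
    ∃ p ∈ PP K, ∃ q ∈ PP K,
      g = p + q * (X (inr 0) * X (inr 1) * X (inr 2)) := by
  classical
  set s := g.support.filter (fun d => ∀ j, Even (d (inr j))) with hs
  set t := g.support.filter (fun d => ¬ (∀ j, Even (d (inr j)))) with ht
  have hsplit : g = (∑ d ∈ s, monomial d (coeff d g)) + ∑ d ∈ t, monomial d (coeff d g) := by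
    rw [hs, ht, Finset.sum_filter_add_sum_filter_not]
    exact (support_sum_monomial_coeff g).symm
  have hp : (∑ d ∈ s, monomial d (coeff d g)) ∈ PP K := by
    apply sum_mem
    intro d hd
    rw [hs, Finset.mem_filter] at hd
    exact even_monomial_mem hd.2 _
  have hodd : ∀ d ∈ t, ∀ j, Odd (d (inr j)) := by
    intro d hd
    rw [ht, Finset.mem_filter] at hd
    rcases coeff_even_or_odd h2 hg (mem_support_iff.mp hd.1) with he | ho
    · exact absurd he hd.2
    · exact ho
  choose q hq1 hq2 using fun (d : (Fin 3 ⊕ Fin 3) →₀ ℕ) (hd : d ∈ t) =>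
    odd_monomial_eq (hodd d hd) (coeff d g)
  refine ⟨_, hp, ∑ d ∈ t.attach, q d.1 d.2, sum_mem (fun d _ => hq1 d.1 d.2), ?_⟩
  have hT : ∑ d ∈ t, monomial d (coeff d g)
      = ∑ d ∈ t.attach, q d.1 d.2 * (X (inr 0) * X (inr 1) * X (inr 2)) := by
    rw [← Finset.sum_attach t (fun d => monomial d (coeff d g))]
    exact Finset.sum_congr rfl (fun d _ => hq2 d.1 d.2)
  rw [Finset.sum_mul, ← hT]
  exact hsplit

lemma mem_PP_even {p : MvPolynomial (Fin 3 ⊕ Fin 3) K} (hp : p ∈ PP K) :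
    ∀ d, coeff d p ≠ 0 → ∀ j : Fin 3, Even (d (inr j)) := by
  induction hp using Algebra.adjoin_induction with
  | mem x hx =>
    intro d hd j
    simp only [Sp, Set.mem_insert_iff, Set.mem_singleton_iff] at hx
    have key : ∀ (i : Fin 3 ⊕ Fin 3) (n : ℕ), (∀ jj : Fin 3, i = inr jj → Even n) →
        x = (X i : MvPolynomial (Fin 3 ⊕ Fin 3) K) ^ n → Even (d (inr j)) := by
      rintro i n hn rfl
      rw [X_pow_eq_monomial, coeff_monomial] at hd
      split_ifs at hd with h
      · rw [← h, Finsupp.single_apply]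
        split_ifs with hij
        · exact hn _ hij
        · exact Even.zero
      · exact absurd rfl hd
    rcases hx with h | h | h | h | h | h
    · exact key (inl 0) 1 (by simp) (by rw [h, pow_one])
    · exact key (inl 1) 1 (by simp) (by rw [h, pow_one])
    · exact key (inl 2) 1 (by simp) (by rw [h, pow_one])
    · exact key (inr 0) 2 (fun _ _ => ⟨1, rfl⟩) h
    · exact key (inr 1) 2 (fun _ _ => ⟨1, rfl⟩) h
    · exact key (inr 2) 2 (fun _ _ => ⟨1, rfl⟩) h
  | algebraMap r =>
    intro d hd j
    rw [algebraMap_eq, coeff_C] at hd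
    split_ifs at hd with h
    · rw [← h]; exact Even.zero
    · exact absurd rfl hd
  | add x y hx hy ihx ihy =>
    intro d hd j
    have : coeff d x ≠ 0 ∨ coeff d y ≠ 0 := by
      by_contra hc
      push_neg at hc
      rw [coeff_add, hc.1, hc.2, add_zero] at hd
      exact hd rfl
    rcases this with h | h
    · exact ihx d h j
    · exact ihy d h j
  | mul x y hx hy ihx ihy =>
    intro d hd j
    have hd' : d ∈ (x * y).support := mem_support_iff.mpr hd
    have hsub := MvPolynomial.support_mul x y hd'
    obtain ⟨a, ha, b, hb, hab⟩ := Finset.mem_add.mp hsub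
    rw [← hab, Finsupp.add_apply]
    exact (ihx a (mem_support_iff.mp ha) j).add (ihy b (mem_support_iff.mp hb) j)

lemma qw_odd {q : MvPolynomial (Fin 3 ⊕ Fin 3) K} (hq : q ∈ PP K)
    {d : (Fin 3 ⊕ Fin 3) →₀ ℕ}
    (h : coeff d (q * (X (inr 0) * X (inr 1) * X (inr 2))) ≠ 0) :
    ∀ j : Fin 3, Odd (d (inr j)) := by
  intro j
  classical
  set u : (Fin 3 ⊕ Fin 3) →₀ ℕ :=
    Finsupp.single (inr 0) 1 + Finsupp.single (inr 1) 1 + Finsupp.single (inr 2) 1 with hu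
  have hw : (X (inr 0) * X (inr 1) * X (inr 2) : MvPolynomial (Fin 3 ⊕ Fin 3) K)
      = monomial u (1:K) := by
    rw [hu, show (X (inr 0) : MvPolynomial (Fin 3 ⊕ Fin 3) K) = monomial
      (Finsupp.single (inr 0) 1) 1 from rfl,
      show (X (inr 1) : MvPolynomial (Fin 3 ⊕ Fin 3) K) = monomial
      (Finsupp.single (inr 1) 1) 1 from rfl,
      show (X (inr 2) : MvPolynomial (Fin 3 ⊕ Fin 3) K) = monomial
      (Finsupp.single (inr 2) 1) 1 from rfl, monomial_mul, monomial_mul, one_mul, one_mul]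
  have hd' : d ∈ (q * (X (inr 0) * X (inr 1) * X (inr 2))).support := mem_support_iff.mpr h
  have hsub := MvPolynomial.support_mul _ _ hd'
  obtain ⟨a, ha, b, hb, hab⟩ := Finset.mem_add.mp hsub
  have hb' : b = u := by
    rw [hw] at hb
    have := MvPolynomial.support_monomial (s := u) (a := (1:K)) ▸ hb
    simpa [one_ne_zero] using this
  have heven : Even (a (inr j)) := mem_PP_even hq a (mem_support_iff.mp ha) j
  have huj : u (inr j) = 1 := by
    fin_cases j <;> simp [hu, Finsupp.single_apply]
  rw [← hab, Finsupp.add_apply, hb', huj]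
  exact heven.add_one

lemma unique0 {p q : MvPolynomial (Fin 3 ⊕ Fin 3) K} (hp : p ∈ PP K) (hq : q ∈ PP K)
    (h : p + q * (X (inr 0) * X (inr 1) * X (inr 2)) = 0) : p = 0 ∧ q = 0 := by
  have hp0 : p = 0 := by
    by_contra hne
    obtain ⟨d, hd⟩ : ∃ d, coeff d p ≠ 0 := by
      by_contra hall
      push_neg at hall
      exact hne (MvPolynomial.ext _ _ fun d => by rw [hall, coeff_zero])
    have heven := mem_PP_even hp d hd 0
    have hqw : coeff d (q * (X (inr 0) * X (inr 1) * X (inr 2))) ≠ 0 := by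
      have hzero : coeff d p + coeff d (q * (X (inr 0) * X (inr 1) * X (inr 2))) = 0 := by
        rw [← coeff_add, h, coeff_zero]
      intro h0
      rw [h0, add_zero] at hzero
      exact hd hzero
    exact (Nat.not_odd_iff_even.mpr heven) (qw_odd hq hqw 0)
  refine ⟨hp0, ?_⟩
  have hqw0 : q * (X (inr 0) * X (inr 1) * X (inr 2)) = 0 := by
    rw [hp0, zero_add] at h; exact h
  have hwne : (X (inr 0) * X (inr 1) * X (inr 2) : MvPolynomial (Fin 3 ⊕ Fin 3) K) ≠ 0 :=
    mul_ne_zero (mul_ne_zero (X_ne_zero _) (X_ne_zero _)) (X_ne_zero _)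
  exact (mul_eq_zero.mp hqw0).resolve_right hwne

/-! algebraic independence -/

def nv : (Fin 3 ⊕ Fin 3) → ℕ := Sum.elim (fun _ => 1) (fun _ => 2)

def scl (d : (Fin 3 ⊕ Fin 3) →₀ ℕ) : (Fin 3 ⊕ Fin 3) →₀ ℕ :=
  Finsupp.equivFunOnFinite.symm (fun i => nv i * d i)

lemma scl_apply (d : (Fin 3 ⊕ Fin 3) →₀ ℕ) (i : Fin 3 ⊕ Fin 3) : scl d i = nv i * d i := rfl

lemma chi_monomial (d : (Fin 3 ⊕ Fin 3) →₀ ℕ) (c : K) :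
    aeval (fun i => (X i : MvPolynomial (Fin 3 ⊕ Fin 3) K) ^ nv i) (monomial d c)
      = monomial (scl d) c := by
  rw [aeval_monomial, monomial_eq_prod, algebraMap_eq]
  congr 1
  rw [Finsupp.prod_fintype _ _ (fun i => by rw [pow_zero])]
  exact Finset.prod_congr rfl fun i _ => by rw [← pow_mul, scl_apply]

lemma scl_inj : Function.Injective scl := by
  intro a b hab
  ext i
  have h := DFunLike.congr_fun hab i
  rw [scl_apply, scl_apply] at h
  have hnv : nv i ≠ 0 := by cases i <;> simp [nv]
  exact Nat.eq_of_mul_eq_mul_left (Nat.pos_of_ne_zero hnv) h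

lemma chi_inj :
    Function.Injective
      (aeval (fun i => (X i : MvPolynomial (Fin 3 ⊕ Fin 3) K) ^ nv i) :
        MvPolynomial (Fin 3 ⊕ Fin 3) K →ₐ[K] MvPolynomial (Fin 3 ⊕ Fin 3) K) := by
  have key : ∀ (g : MvPolynomial (Fin 3 ⊕ Fin 3) K) (d),
      coeff (scl d) (aeval (fun i => (X i : MvPolynomial (Fin 3 ⊕ Fin 3) K) ^ nv i) g)
        = coeff d g := by
    intro g
    induction g using MvPolynomial.induction_on' with
    | monomial u c =>
      intro d
      rw [chi_monomial, coeff_monomial, coeff_monomial]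
      by_cases h : u = d
      · rw [if_pos h, if_pos (by rw [h])]
      · rw [if_neg h, if_neg (fun hc => h (scl_inj hc))]
    | add a b ha hb =>
      intro d
      simp only [map_add, coeff_add, ha, hb]
  intro a b hab
  apply MvPolynomial.ext
  intro d
  rw [← key a d, ← key b d, hab]

end StmtAux

open StmtAux Sum in
/-- Let `K` be a field of characteristic `0` or `> 3`.  The six
elements `x₁, x₂, x₃, z₁², z₂², z₃²` of `R` are algebraically independent over `K`,
and `R^H` is a free module of rank two over the subalgebra
`P = K[x₁, x₂, x₃, z₁², z₂², z₃²]` with basis `{1, z₁z₂z₃}`, i.e.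
`R^H = P ⊕ P·z₁z₂z₃`: every element of `R^H` is `p + q·z₁z₂z₃` with `p, q ∈ P`, and
such a representation is unique. -/
theorem HInv_free_rank_two
    (hchar : ringChar K = 0 ∨ 3 < ringChar K) :
    AlgebraicIndependent K
      ![xg K 0, xg K 1, xg K 2, zg K 0 ^ 2, zg K 1 ^ 2, zg K 2 ^ 2]
    ∧ (∀ f ∈ HInv K,
        ∃ p ∈ Algebra.adjoin K
            {xg K 0, xg K 1, xg K 2, zg K 0 ^ 2, zg K 1 ^ 2, zg K 2 ^ 2},
          ∃ q ∈ Algebra.adjoin K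
              {xg K 0, xg K 1, xg K 2, zg K 0 ^ 2, zg K 1 ^ 2, zg K 2 ^ 2},
            f = p + q * (zg K 0 * zg K 1 * zg K 2))
    ∧ (∀ p ∈ Algebra.adjoin K
          {xg K 0, xg K 1, xg K 2, zg K 0 ^ 2, zg K 1 ^ 2, zg K 2 ^ 2},
        ∀ q ∈ Algebra.adjoin K
            {xg K 0, xg K 1, xg K 2, zg K 0 ^ 2, zg K 1 ^ 2, zg K 2 ^ 2},
          p + q * (zg K 0 * zg K 1 * zg K 2) = 0 → p = 0 ∧ q = 0) := by
  classical
  have h2 : (2:K) ≠ 0 := by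
    intro h
    haveI := ringChar.charP K
    have hdvd : ringChar K ∣ 2 := (CharP.cast_eq_zero_iff K (ringChar K) 2).mp (by
      exact_mod_cast h)
    rcases hchar with h0 | h3
    · rw [h0] at hdvd
      omega
    · have := Nat.le_of_dvd (by norm_num) hdvd
      omega
  have himg : Phi K '' (Sp K) =
      {xg K 0, xg K 1, xg K 2, zg K 0 ^ 2, zg K 1 ^ 2, zg K 2 ^ 2} := by
    simp only [Sp, Set.image_insert_eq, Set.image_singleton, Phi_Xl, Phi_Xr, map_pow]
  have hadj : Algebra.adjoin K
        {xg K 0, xg K 1, xg K 2, zg K 0 ^ 2, zg K 1 ^ 2, zg K 2 ^ 2}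
      = (PP K).map (Phi K) := by
    rw [← himg, AlgHom.map_adjoin]
  refine ⟨?_, ?_, ?_⟩
  · -- algebraic independence
    have hee : Function.Injective (![inl 0, inl 1, inl 2, inr 0, inr 1, inr 2] : Fin 6 → Fin 3 ⊕ Fin 3) := by decide
    have hcomp : (aeval ![xg K 0, xg K 1, xg K 2, zg K 0 ^ 2, zg K 1 ^ 2, zg K 2 ^ 2] :
          MvPolynomial (Fin 6) K →ₐ[K] R4 K)
        = (Phi K).comp
            ((aeval fun i => (X i : MvPolynomial (Fin 3 ⊕ Fin 3) K) ^ nv i).comp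
              (rename ![inl 0, inl 1, inl 2, inr 0, inr 1, inr 2])) := by
      apply MvPolynomial.algHom_ext
      intro j
      have h5 : (![inl 0, inl 1, inl 2, inr 0, inr 1, inr 2] : Fin 6 → Fin 3 ⊕ Fin 3) 5
          = inr 2 := rfl
      have v5 : (![xg K 0, xg K 1, xg K 2, zg K 0 ^ 2, zg K 1 ^ 2, zg K 2 ^ 2] :
          Fin 6 → R4 K) 5 = zg K 2 ^ 2 := rfl
      fin_cases j <;>
        (simp [nv, h5, v5, Fin.zero_eta, Fin.mk_one, Fin.reduceFinMk, Matrix.cons_val_succ];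
          try rfl)
    show Function.Injective _
    rw [hcomp, AlgHom.coe_comp, AlgHom.coe_comp]
    exact (Phi_inj h2).comp (chi_inj.comp (rename_injective _ hee))
  · -- existence
    intro f hf
    obtain ⟨p0, hp0, q0, hq0, hg⟩ := decomp h2 (sg_invariant h2 hf)
    refine ⟨Phi K p0, ?_, Phi K q0, ?_, ?_⟩
    · rw [hadj]; exact Subalgebra.mem_map.mpr ⟨p0, hp0, rfl⟩
    · rw [hadj]; exact Subalgebra.mem_map.mpr ⟨q0, hq0, rfl⟩
    · have hfe := congrArg (Phi K) hg
      rw [Phi_Psi h2] at hfe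
      rw [hfe]
      simp [map_add, map_mul]
  · -- uniqueness
    intro p hp q hq h
    rw [hadj] at hp hq
    obtain ⟨p0, hp0, rfl⟩ := Subalgebra.mem_map.mp hp
    obtain ⟨q0, hq0, rfl⟩ := Subalgebra.mem_map.mp hq
    have h' : Phi K (p0 + q0 * (X (inr 0) * X (inr 1) * X (inr 2))) = Phi K 0 := by
      rw [map_zero, ← h]
      simp [map_add, map_mul]
    obtain ⟨e1, e2⟩ := unique0 hp0 hq0 (Phi_inj h2 h')
    exact ⟨by rw [e1, map_zero], by rw [e2, map_zero]⟩

end
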